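/- If D: I_M^L → [0,1] is a discrete copula, then the array A with entries a_{i₁…i_L} := M · (Δ_{i_L−1}^{i_L} ⋯ Δ_{i₁−1}^{i₁} D), the M-scaled L-fold difference of D over the unit lattice box with upper corner (i₁/M,…,i_L/M), is an L-dimensional stochastic array of order M, and D(i₁/M,…,i_L/M) = (1/M) Σ_{ν₁≤i₁} ⋯ Σ_{ν_L≤i_L} a_{ν₁…ν_L}. -/

import Mathlib

open Finset

/-- The sign `(-1)^{#{ℓ : ε ℓ = false}}` appearing in `L`-fold first-order differences. -/
def boxSign {L : ℕ} (ε : Fin L → Bool) : ℝ :=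
  (-1 : ℝ) ^ (Finset.univ.filter (fun ℓ => ε ℓ = false)).card

/-- `D` is a discrete copula on `I_M^L`: the lattice point `(i₁/M, …, i_L/M)` is encoded
by an index vector `i : Fin L → ℕ` with `i ℓ ≤ M`.  The conditions are: values in `[0,1]`,
groundedness (D1), uniform margins (D2), and `L`-increasingness over unit lattice boxes (D3). -/
def IsDiscreteCopula (M L : ℕ) (D : (Fin L → ℕ) → ℝ) : Prop :=
  (∀ i : Fin L → ℕ, (∀ ℓ, i ℓ ≤ M) → D i ∈ Set.Icc (0 : ℝ) 1) ∧
  (∀ i : Fin L → ℕ, (∀ ℓ, i ℓ ≤ M) → (∃ ℓ, i ℓ = 0) → D i = 0) ∧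
  (∀ ℓ : Fin L, ∀ k : ℕ, k ≤ M →
    D (fun l => if l = ℓ then k else M) = (k : ℝ) / M) ∧
  (∀ i : Fin L → ℕ, (∀ ℓ, 1 ≤ i ℓ ∧ i ℓ ≤ M) →
    0 ≤ ∑ ε : Fin L → Bool,
        boxSign ε * D (fun ℓ => if ε ℓ then i ℓ else i ℓ - 1))

/-- An `L`-dimensional stochastic array of order `M`: nonnegative entries (indexed by
`ν : Fin L → Fin M`, where `ν ℓ` encodes the index `ν ℓ + 1 ∈ {1,…,M}`), and every line sum
(fixing one index and summing over the others) equals `1`. -/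
def IsStochasticArray (M L : ℕ) (A : (Fin L → Fin M) → ℝ) : Prop :=
  (∀ ν, 0 ≤ A ν) ∧
  (∀ ℓ : Fin L, ∀ j : Fin M,
    ∑ ν : Fin L → Fin M, (if ν ℓ = j then A ν else 0) = 1)

/-- A permutation array: a stochastic array all of whose entries lie in `{0, 1}`. -/
def IsPermutationArray (M L : ℕ) (A : (Fin L → Fin M) → ℝ) : Prop :=
  IsStochasticArray M L A ∧ ∀ ν, A ν = 0 ∨ A ν = 1

/-- The normalized cumulative sum `(1/M) Σ_{ν₁ ≤ i₁} ⋯ Σ_{ν_L ≤ i_L} a_{ν₁…ν_L}`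
(with `ν ℓ + 1 ≤ i ℓ` in the `Fin M` encoding; empty sums are zero). -/
noncomputable def cumSum (M L : ℕ) (A : (Fin L → Fin M) → ℝ) (i : Fin L → ℕ) : ℝ :=
  (1 / (M : ℝ)) * ∑ ν : Fin L → Fin M, (if ∀ ℓ, (ν ℓ : ℕ) < i ℓ then A ν else 0)

/-- if `D` is a discrete copula, the array of `M`-scaled `L`-fold differences
of `D` over unit lattice boxes is a stochastic array, and `D` is its cumulative sum. -/
lemma boxSign_prod {L : ℕ} (ε : Fin L → Bool) :
    boxSign ε = ∏ ℓ, (if ε ℓ then (1:ℝ) else -1) := by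
  unfold boxSign
  rw [← Finset.prod_const, Finset.prod_filter]
  exact Finset.prod_congr rfl fun ℓ _ => by cases h : ε ℓ <;> simp [h]

lemma boxSign_cons {n : ℕ} (b : Bool) (e : Fin n → Bool) :
    boxSign (Fin.cons b e) = (if b then (1:ℝ) else -1) * boxSign e := by
  simp only [boxSign_prod, Fin.prod_univ_succ, Fin.cons_zero, Fin.cons_succ]

lemma telescope (M k : ℕ) (hk : k ≤ M) (g : ℕ → ℝ) :
    ∑ a : Fin M, (if (a:ℕ) < k then g ((a:ℕ)+1) - g (a:ℕ) else 0) = g k - g 0 := by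
  rw [Fin.sum_univ_eq_sum_range (fun m => if m < k then g (m+1) - g m else 0) M]
  have h1 : ∀ m ∈ Finset.range M, (if m < k then g (m+1) - g m else 0)
      = if m ∈ Finset.range k then g (m+1) - g m else 0 := by
    intro m _; simp [Finset.mem_range]
  rw [Finset.sum_congr rfl h1, Finset.sum_ite_mem,
    Finset.inter_eq_right.mpr (Finset.range_subset_range.mpr hk), Finset.sum_range_sub g k]

lemma key_telescope : ∀ (L M : ℕ) (F : (Fin L → ℕ) → ℝ) (i : Fin L → ℕ), (∀ ℓ, i ℓ ≤ M) →
    (∑ ν : Fin L → Fin M, if ∀ ℓ, (ν ℓ : ℕ) < i ℓ then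
        ∑ ε : Fin L → Bool, boxSign ε * F (fun ℓ => if ε ℓ then (ν ℓ : ℕ) + 1 else (ν ℓ : ℕ))
      else 0)
    = ∑ ε : Fin L → Bool, boxSign ε * F (fun ℓ => if ε ℓ then i ℓ else 0) := by
  intro L
  induction L with
  | zero =>
    intro M F i hi
    have hF : ∀ (x y : Fin 0 → ℕ), F x = F y := fun x y => congrArg F (Subsingleton.elim x y)
    simp only [Finset.univ_unique, Finset.sum_singleton]
    rw [if_pos (fun ℓ => ℓ.elim0)]
    congr 1
    exact hF _ _
  | succ n IH =>
    intro M F i hi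
    set G : ℕ → ℝ := fun k => ∑ e : Fin n → Bool,
      boxSign e * F (Fin.cons k (fun ℓ => if e ℓ then i ℓ.succ else 0)) with hG
    have cons_sum : ∀ (X : Type) [Fintype X] [DecidableEq X] (f : (Fin (n+1) → X) → ℝ),
        ∑ ν : Fin (n+1) → X, f ν = ∑ a : X, ∑ g : Fin n → X, f (Fin.cons a g) := by
      intro X _ _ f
      rw [← Fintype.sum_equiv (Fin.consEquiv fun _ => X) (fun p => f (Fin.cons p.1 p.2)) f
          (fun p => rfl), Fintype.sum_prod_type]
    have hRHS : ∑ ε : Fin (n+1) → Bool, boxSign ε * F (fun ℓ => if ε ℓ then i ℓ else 0)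
        = G (i 0) - G 0 := by
      rw [cons_sum]
      have hb : ∀ (b : Bool) (e : Fin n → Bool),
          boxSign (Fin.cons b e) * F (fun ℓ => if Fin.cons (α := fun _ => Bool) b e ℓ = true then i ℓ else 0)
          = (if b then (1:ℝ) else -1) * (boxSign e *
              F (Fin.cons (if b then i 0 else 0) (fun ℓ => if e ℓ then i ℓ.succ else 0))) := by
        intro b e
        have harg : (fun ℓ => if Fin.cons (α := fun _ => Bool) b e ℓ = true then i ℓ else 0)
            = Fin.cons (α := fun _ => ℕ) (if b then i 0 else 0)
                (fun ℓ => if e ℓ then i ℓ.succ else 0) := by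
          funext ℓ
          refine Fin.cases ?_ (fun ℓ' => ?_) ℓ <;> simp
        rw [boxSign_cons, harg, mul_assoc]
      simp only [hb, ← Finset.mul_sum, ← hG]
      rw [Fintype.sum_bool]
      simp [hG, sub_eq_add_neg]
    rw [hRHS, cons_sum]
    have hstep : ∀ a : Fin M,
        (∑ g : Fin n → Fin M, if (∀ ℓ, ((Fin.cons a g : Fin (n+1) → Fin M) ℓ : ℕ) < i ℓ) then
            ∑ ε : Fin (n+1) → Bool, boxSign ε *
              F (fun ℓ => if ε ℓ then ((Fin.cons a g : Fin (n+1) → Fin M) ℓ : ℕ) + 1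
                  else ((Fin.cons a g : Fin (n+1) → Fin M) ℓ : ℕ))
          else 0)
        = if (a:ℕ) < i 0 then G ((a:ℕ)+1) - G (a:ℕ) else 0 := by
      intro a
      have hcond : ∀ g : Fin n → Fin M,
          (∀ ℓ, ((Fin.cons a g : Fin (n+1) → Fin M) ℓ : ℕ) < i ℓ)
          ↔ ((a:ℕ) < i 0 ∧ ∀ ℓ, (g ℓ : ℕ) < i ℓ.succ) := by
        intro g
        rw [Fin.forall_fin_succ]
        simp
      by_cases ha : (a:ℕ) < i 0
      · have hinner : ∀ g : Fin n → Fin M,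
            (∑ ε : Fin (n+1) → Bool, boxSign ε *
              F (fun ℓ => if ε ℓ then ((Fin.cons a g : Fin (n+1) → Fin M) ℓ : ℕ) + 1
                  else ((Fin.cons a g : Fin (n+1) → Fin M) ℓ : ℕ)))
            = ∑ b : Bool, (if b then (1:ℝ) else -1) *
                ∑ e : Fin n → Bool, boxSign e *
                  F (Fin.cons (if b then (a:ℕ)+1 else (a:ℕ))
                      (fun ℓ => if e ℓ then (g ℓ : ℕ)+1 else (g ℓ : ℕ))) := by
          intro g
          rw [cons_sum]
          refine Finset.sum_congr rfl fun b _ => ?_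
          rw [Finset.mul_sum]
          refine Finset.sum_congr rfl fun e _ => ?_
          have harg : (fun ℓ => if Fin.cons (α := fun _ => Bool) b e ℓ = true then ((Fin.cons a g : Fin (n+1) → Fin M) ℓ : ℕ) + 1
                  else ((Fin.cons a g : Fin (n+1) → Fin M) ℓ : ℕ))
              = Fin.cons (α := fun _ => ℕ) (if b then (a:ℕ)+1 else (a:ℕ))
                  (fun ℓ => if e ℓ then (g ℓ : ℕ)+1 else (g ℓ : ℕ)) := by
            funext ℓ
            refine Fin.cases ?_ (fun ℓ' => ?_) ℓ <;> simp
          rw [boxSign_cons, harg, mul_assoc]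
        calc (∑ g : Fin n → Fin M, if (∀ ℓ, ((Fin.cons a g : Fin (n+1) → Fin M) ℓ : ℕ) < i ℓ) then
              ∑ ε : Fin (n+1) → Bool, boxSign ε *
                F (fun ℓ => if ε ℓ then ((Fin.cons a g : Fin (n+1) → Fin M) ℓ : ℕ) + 1
                    else ((Fin.cons a g : Fin (n+1) → Fin M) ℓ : ℕ))
            else 0)
            = ∑ g : Fin n → Fin M, (if (∀ ℓ, (g ℓ : ℕ) < i ℓ.succ) then
                ∑ b : Bool, (if b then (1:ℝ) else -1) *
                  ∑ e : Fin n → Bool, boxSign e *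
                    F (Fin.cons (if b then (a:ℕ)+1 else (a:ℕ))
                        (fun ℓ => if e ℓ then (g ℓ : ℕ)+1 else (g ℓ : ℕ)))
              else 0) := by
              refine Finset.sum_congr rfl fun g _ => ?_
              rw [hinner g]
              by_cases h : (∀ ℓ, (g ℓ : ℕ) < i ℓ.succ)
              · rw [if_pos ((hcond g).mpr ⟨ha, h⟩), if_pos h]
              · rw [if_neg (fun hh => h ((hcond g).mp hh).2), if_neg h]
          _ = ∑ b : Bool, (if b then (1:ℝ) else -1) *
                ∑ g : Fin n → Fin M, (if (∀ ℓ, (g ℓ : ℕ) < i ℓ.succ) then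
                  ∑ e : Fin n → Bool, boxSign e *
                    F (Fin.cons (if b then (a:ℕ)+1 else (a:ℕ))
                        (fun ℓ => if e ℓ then (g ℓ : ℕ)+1 else (g ℓ : ℕ)))
                else 0) := by
              have hpush : ∀ g : Fin n → Fin M,
                  (if (∀ ℓ, (g ℓ : ℕ) < i ℓ.succ) then
                    ∑ b : Bool, (if b then (1:ℝ) else -1) *
                      ∑ e : Fin n → Bool, boxSign e *
                        F (Fin.cons (if b then (a:ℕ)+1 else (a:ℕ))
                            (fun ℓ => if e ℓ then (g ℓ : ℕ)+1 else (g ℓ : ℕ)))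
                  else 0)
                  = ∑ b : Bool, (if b then (1:ℝ) else -1) *
                      (if (∀ ℓ, (g ℓ : ℕ) < i ℓ.succ) then
                        ∑ e : Fin n → Bool, boxSign e *
                          F (Fin.cons (if b then (a:ℕ)+1 else (a:ℕ))
                              (fun ℓ => if e ℓ then (g ℓ : ℕ)+1 else (g ℓ : ℕ)))
                      else 0) := by
                intro g
                by_cases h : (∀ ℓ, (g ℓ : ℕ) < i ℓ.succ) <;> simp [h]
              rw [Finset.sum_congr rfl fun g _ => hpush g, Finset.sum_comm]
              refine Finset.sum_congr rfl fun b _ => ?_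
              rw [Finset.mul_sum]
          _ = ∑ b : Bool, (if b then (1:ℝ) else -1) * G (if b then (a:ℕ)+1 else (a:ℕ)) := by
              refine Finset.sum_congr rfl fun b _ => ?_
              congr 1
              exact IH M (fun h => F (Fin.cons (if b then (a:ℕ)+1 else (a:ℕ)) h))
                (fun ℓ => i ℓ.succ) (fun ℓ => hi ℓ.succ)
          _ = if (a:ℕ) < i 0 then G ((a:ℕ)+1) - G (a:ℕ) else 0 := by
              rw [Fintype.sum_bool]
              simp [ha, sub_eq_add_neg]
      · have hneg : ∀ g : Fin n → Fin M,
            ¬ (∀ ℓ, ((Fin.cons a g : Fin (n+1) → Fin M) ℓ : ℕ) < i ℓ) := by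
          intro g h
          exact ha ((hcond g).mp h).1
        rw [Finset.sum_congr rfl fun g _ => if_neg (hneg g), Finset.sum_const_zero, if_neg ha]
    rw [Finset.sum_congr rfl fun a _ => hstep a]
    exact telescope M (i 0) (hi 0) G

theorem discreteCopula_gives_stochasticArray (M L : ℕ) (hM : 0 < M) (hL : 2 ≤ L)
    (D : (Fin L → ℕ) → ℝ) (hD : IsDiscreteCopula M L D)
    (A : (Fin L → Fin M) → ℝ)
    (hA : ∀ ν : Fin L → Fin M,
      A ν = (M : ℝ) * ∑ ε : Fin L → Bool,
        boxSign ε * D (fun ℓ => if ε ℓ then (ν ℓ : ℕ) + 1 else (ν ℓ : ℕ))) :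
    IsStochasticArray M L A ∧
      ∀ i : Fin L → ℕ, (∀ ℓ, i ℓ ≤ M) → D i = cumSum M L A i := by
  obtain ⟨hIcc, hground, hmargin, hincr⟩ := hD
  have hMne : (M:ℝ) ≠ 0 := Nat.cast_ne_zero.mpr hM.ne'
  have hcum : ∀ i : Fin L → ℕ, (∀ ℓ, i ℓ ≤ M) →
      (∑ ν : Fin L → Fin M, if ∀ ℓ, (ν ℓ : ℕ) < i ℓ then A ν else 0) = (M:ℝ) * D i := by
    intro i hi
    have h1 : ∀ ν : Fin L → Fin M, (if ∀ ℓ, (ν ℓ:ℕ) < i ℓ then A ν else 0)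
        = (M:ℝ) * (if ∀ ℓ, (ν ℓ:ℕ) < i ℓ then
            ∑ ε : Fin L → Bool, boxSign ε * D (fun ℓ => if ε ℓ then (ν ℓ:ℕ)+1 else (ν ℓ:ℕ))
          else 0) := by
      intro ν; by_cases h : ∀ ℓ, (ν ℓ:ℕ) < i ℓ <;> simp [h, hA ν]
    rw [Finset.sum_congr rfl fun ν _ => h1 ν, ← Finset.mul_sum, key_telescope L M D i hi]
    congr 1
    rw [Finset.sum_eq_single (fun _ => true)]
    · simp [boxSign]
    · intro ε _ hne
      obtain ⟨ℓ, hℓ⟩ : ∃ ℓ, ε ℓ = false := by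
        by_contra h
        push_neg at h
        exact hne (funext fun ℓ => by simpa using h ℓ)
      have hz : D (fun l => if ε l then i l else 0) = 0 := by
        apply hground _ (fun l => by by_cases h : ε l <;> simp [h, hi l]) ⟨ℓ, by simp [hℓ]⟩
      rw [hz, mul_zero]
    · intro h
      exact absurd (Finset.mem_univ _) h
  have hnn : ∀ ν, 0 ≤ A ν := by
    intro ν
    rw [hA ν]
    apply mul_nonneg (Nat.cast_nonneg M)
    have h := hincr (fun ℓ => (ν ℓ:ℕ)+1)
      (fun ℓ => ⟨Nat.le_add_left 1 _, Nat.succ_le_of_lt (ν ℓ).isLt⟩)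
    simpa using h
  have hline : ∀ (ℓ : Fin L) (j : Fin M),
      ∑ ν : Fin L → Fin M, (if ν ℓ = j then A ν else 0) = 1 := by
    intro ℓ j
    have hplus : ∀ ν : Fin L → Fin M,
        (∀ l, (ν l:ℕ) < (if l = ℓ then (j:ℕ)+1 else M)) ↔ (ν ℓ:ℕ) < (j:ℕ)+1 := by
      intro ν
      constructor
      · intro h; simpa using h ℓ
      · intro h l; by_cases hl : l = ℓ <;> simp [hl, h, (ν l).isLt]
    have hminus : ∀ ν : Fin L → Fin M,
        (∀ l, (ν l:ℕ) < (if l = ℓ then (j:ℕ) else M)) ↔ (ν ℓ:ℕ) < (j:ℕ) := by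
      intro ν
      constructor
      · intro h; simpa using h ℓ
      · intro h l; by_cases hl : l = ℓ <;> simp [hl, h, (ν l).isLt]
    have hsplit : ∀ ν : Fin L → Fin M, (if ν ℓ = j then A ν else 0)
        = (if ∀ l, (ν l:ℕ) < (fun l => if l = ℓ then (j:ℕ)+1 else M) l then A ν else 0)
          - (if ∀ l, (ν l:ℕ) < (fun l => if l = ℓ then (j:ℕ) else M) l then A ν else 0) := by
      intro ν
      simp only []
      by_cases h : ν ℓ = j
      · have hv : (ν ℓ:ℕ) = (j:ℕ) := by rw [h]
        rw [if_pos h, if_pos ((hplus ν).mpr (by omega)),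
          if_neg (fun hh => by have := (hminus ν).mp hh; omega), sub_zero]
      · have hne : (ν ℓ:ℕ) ≠ (j:ℕ) := fun hh => h (Fin.ext hh)
        by_cases hlt : (ν ℓ:ℕ) < (j:ℕ)
        · rw [if_neg h, if_pos ((hplus ν).mpr (by omega)), if_pos ((hminus ν).mpr hlt), sub_self]
        · rw [if_neg h, if_neg (fun hh => by have := (hplus ν).mp hh; omega),
            if_neg (fun hh => by have := (hminus ν).mp hh; omega), sub_self]
    rw [Finset.sum_congr rfl fun ν _ => hsplit ν, Finset.sum_sub_distrib,
      hcum _ (fun l => by by_cases hl : l = ℓ <;> simp [hl, Nat.succ_le_of_lt j.isLt]),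
      hcum _ (fun l => by by_cases hl : l = ℓ <;> simp [hl, le_of_lt j.isLt]),
      hmargin ℓ ((j:ℕ)+1) j.isLt, hmargin ℓ (j:ℕ) (le_of_lt j.isLt)]
    push_cast
    field_simp
    ring
  refine ⟨⟨hnn, hline⟩, fun i hi => ?_⟩
  unfold cumSum
  rw [hcum i hi]
  field_simp
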